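/- arXiv:1304.3626 — 4 statements merged into one kernel-verified Lean document; each statement's English description precedes it below -/
import Mathlib

section
/- Let β < 1, c > -β, α > 0, u > max(β,0), and let (R_n) be a sequence of real numbers with R_n ≥ u for all n. Define Λ_n = α·Γ(c+1)·Γ(c+β+∑_{i=1}^n R_i)/(Γ(c+β)·Γ(c+1+∑_{i=1}^n R_i)). Then there exists a constant D (depending only on α, β, c, u) such that Λ_n ≤ D/n^(1-β) for all n ≥ 1. -/
open Real Finset

/-- Log-convexity interpolation: `Γ(x+λ) ≤ Γ(x+1) x^(λ-1)` for `x > 0`, `0 ≤ λ ≤ 1`. -/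
lemma gamma_interp_aux (x l : ℝ) (hx : 0 < x) (h0 : 0 ≤ l) (h1 : l ≤ 1) :
    Real.Gamma (x + l) ≤ Real.Gamma (x + 1) * x ^ (l - 1) := by
  have hG : 0 < Real.Gamma (x + 1) := Real.Gamma_pos_of_pos (by linarith)
  rcases eq_or_lt_of_le h0 with h0' | h0'
  · rw [← h0', add_zero]
    have : Real.Gamma (x + 1) = x * Real.Gamma x := Real.Gamma_add_one hx.ne'
    rw [this, show (0:ℝ) - 1 = -1 by ring, Real.rpow_neg_one]
    rw [mul_assoc, mul_comm x, mul_assoc, inv_mul_cancel₀ hx.ne', mul_one]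
  rcases eq_or_lt_of_le h1 with h1' | h1'
  · rw [h1', sub_self, Real.rpow_zero, mul_one]
  have key := Real.Gamma_mul_add_mul_le_rpow_Gamma_mul_rpow_Gamma
    (s := x + 1) (t := x) (a := l) (b := 1 - l) (by linarith) hx h0' (by linarith) (by ring)
  have harg : l * (x + 1) + (1 - l) * x = x + l := by ring
  rw [harg] at key
  have hGx : Real.Gamma x = Real.Gamma (x + 1) / x := by
    rw [Real.Gamma_add_one hx.ne', mul_div_cancel_left₀ _ hx.ne']
  calc Real.Gamma (x + l) ≤ Real.Gamma (x + 1) ^ l * Real.Gamma x ^ (1 - l) := key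
    _ = Real.Gamma (x + 1) * x ^ (l - 1) := by
        rw [hGx, Real.div_rpow hG.le hx.le,
          show l - 1 = -(1 - l) by ring, Real.rpow_neg hx.le]
        rw [mul_div_assoc', ← Real.rpow_add hG, add_sub_cancel, Real.rpow_one,
          div_eq_mul_inv]

/-- `Γ(x+β)·(x+β)^k ≤ Γ(x+1)·x^(β+k-1)` when `0 ≤ β+k ≤ 1`. -/
lemma gamma_shift_aux (k : ℕ) : ∀ β x : ℝ, 0 < x → 0 < x + β → 0 ≤ β + k → β + k ≤ 1 →
    Real.Gamma (x + β) * (x + β) ^ k ≤ Real.Gamma (x + 1) * x ^ (β + k - 1) := by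
  induction k with
  | zero =>
    intro β x hx hxβ h0 h1
    simp only [Nat.cast_zero, add_zero, pow_zero, mul_one] at *
    exact gamma_interp_aux x β hx h0 h1
  | succ k ih =>
    intro β x hx hxβ h0 h1
    have hk : ((k:ℝ) + 1) = ((k+1 : ℕ) : ℝ) := by push_cast; ring
    have h := ih (β + 1) x hx (by linarith) (by push_cast at h0 ⊢; linarith)
      (by push_cast at h1 ⊢; linarith)
    rw [show x + (β + 1) = (x + β) + 1 by ring, Real.Gamma_add_one hxβ.ne'] at h
    have hGpos : 0 < Real.Gamma (x + β) := Real.Gamma_pos_of_pos hxβ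
    have hpow : (x + β) ^ k ≤ (x + β + 1) ^ k :=
      pow_le_pow_left₀ hxβ.le (by linarith) k
    have hexp : β + ((k+1 : ℕ) : ℝ) - 1 = β + 1 + (k:ℝ) - 1 := by push_cast; ring
    calc Real.Gamma (x + β) * (x + β) ^ (k + 1)
        = (x + β) * Real.Gamma (x + β) * (x + β) ^ k := by ring
      _ ≤ (x + β) * Real.Gamma (x + β) * (x + β + 1) ^ k := by
          apply mul_le_mul_of_nonneg_left hpow (by positivity)
      _ ≤ Real.Gamma (x + 1) * x ^ (β + 1 + (k:ℝ) - 1) := h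
      _ = Real.Gamma (x + 1) * x ^ (β + ((k+1 : ℕ) : ℝ) - 1) := by rw [hexp]

/-- Bound `Λ_n ≤ D / n^(1-β)` for the expected number of new dishes in the weighted IBP. -/
theorem Lambda_upper_bound (β c α u : ℝ) (hβ : β < 1) (hc : -β < c) (hα : 0 < α)
    (hu : max β 0 < u) (R : ℕ → ℝ) (hR : ∀ n, u ≤ R n) :
    ∃ D : ℝ, ∀ n : ℕ, 1 ≤ n →
      α * Real.Gamma (c + 1) * Real.Gamma (c + β + ∑ i ∈ Finset.Icc 1 n, R i) /
        (Real.Gamma (c + β) * Real.Gamma (c + 1 + ∑ i ∈ Finset.Icc 1 n, R i)) ≤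
      D / (n : ℝ) ^ (1 - β) := by
  have hu0 : 0 < u := lt_of_le_of_lt (le_max_right β 0) hu
  have huβ : β < u := lt_of_le_of_lt (le_max_left β 0) hu
  have hcβ : 0 < c + β := by linarith
  set m : ℝ := min u (c + u) with hm_def
  have hm : 0 < m := lt_min hu0 (by linarith)
  have hmu : m ≤ u := min_le_left _ _
  set k : ℕ := ⌈-β⌉₊ with hk_def
  have hk0 : 0 ≤ β + k := by
    have := Nat.le_ceil (-β); linarith
  have hk1 : β + k ≤ 1 := by
    rcases le_or_gt (-β) 0 with h | h
    · have : k = 0 := Nat.ceil_eq_zero.mpr h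
      rw [this]; push_cast; linarith
    · have := Nat.ceil_lt_add_one h.le
      linarith
  have hGc1 : 0 < Real.Gamma (c + 1) := Real.Gamma_pos_of_pos (by linarith)
  have hGcβ : 0 < Real.Gamma (c + β) := Real.Gamma_pos_of_pos hcβ
  refine ⟨α * Real.Gamma (c + 1) * m ^ (β + (k:ℝ) - 1) / (Real.Gamma (c + β) * u ^ k),
    fun n hn => ?_⟩
  set S : ℝ := ∑ i ∈ Finset.Icc 1 n, R i with hS_def
  have hN1 : (1:ℝ) ≤ (n:ℝ) := by exact_mod_cast hn
  have hN0 : (0:ℝ) < (n:ℝ) := by linarith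
  have hS : (n:ℝ) * u ≤ S := by
    have : ∑ i ∈ Finset.Icc 1 n, u ≤ S := Finset.sum_le_sum fun i _ => hR i
    rwa [Finset.sum_const, Nat.card_Icc, Nat.add_sub_cancel, nsmul_eq_mul] at this
  have hSpos : 0 < S := lt_of_lt_of_le (by positivity) hS
  have hnm : (n:ℝ) * m ≤ c + S := by
    rcases le_or_gt 0 c with h | h
    · have : (n:ℝ) * m ≤ (n:ℝ) * u := by nlinarith
      nlinarith
    · have hmcu : m ≤ c + u := min_le_right _ _
      nlinarith
  have hnm0 : 0 < (n:ℝ) * m := by positivity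
  have hx : 0 < c + S := lt_of_lt_of_le hnm0 hnm
  have hxβ : 0 < c + S + β := by linarith
  have hnuS : (n:ℝ) * u ≤ c + S + β := by linarith
  -- key Gamma inequality
  have hshift := gamma_shift_aux k β (c + S) hx hxβ hk0 hk1
  have key : Real.Gamma (c + β + S) * ((n:ℝ) * u) ^ k ≤
      Real.Gamma (c + 1 + S) * ((n:ℝ) * m) ^ (β + (k:ℝ) - 1) := by
    have hG' : 0 < Real.Gamma (c + S + β) := Real.Gamma_pos_of_pos hxβ
    have h1 : Real.Gamma (c + S + β) * ((n:ℝ) * u) ^ k ≤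
        Real.Gamma (c + S + β) * (c + S + β) ^ k := by
      apply mul_le_mul_of_nonneg_left (pow_le_pow_left₀ (by positivity) hnuS k) hG'.le
    have h2 : (c + S) ^ (β + (k:ℝ) - 1) ≤ ((n:ℝ) * m) ^ (β + (k:ℝ) - 1) :=
      Real.rpow_le_rpow_of_nonpos hnm0 hnm (by linarith)
    have h3 : Real.Gamma (c + S + 1) * (c + S) ^ (β + (k:ℝ) - 1) ≤
        Real.Gamma (c + S + 1) * ((n:ℝ) * m) ^ (β + (k:ℝ) - 1) :=
      mul_le_mul_of_nonneg_left h2 (Real.Gamma_pos_of_pos (by linarith)).le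
    have := le_trans (le_trans h1 hshift) h3
    rw [show c + S + β = c + β + S by ring, show c + S + 1 = c + 1 + S by ring] at this
    exact this
  have hGS1 : 0 < Real.Gamma (c + 1 + S) := Real.Gamma_pos_of_pos (by linarith)
  have hGSβ : 0 < Real.Gamma (c + β + S) := by
    rw [show c + β + S = c + S + β by ring]; exact Real.Gamma_pos_of_pos hxβ
  -- core inequality
  have core : Real.Gamma (c + β + S) * (n:ℝ) ^ (1 - β) * u ^ k ≤
      m ^ (β + (k:ℝ) - 1) * Real.Gamma (c + 1 + S) := by
    have e1 : (n:ℝ) ^ (1 - β) = (n:ℝ) ^ (k:ℕ) * (n:ℝ) ^ (1 - β - (k:ℝ)) := by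
      rw [← Real.rpow_natCast (n:ℝ) k, ← Real.rpow_add hN0]; ring_nf
    calc Real.Gamma (c + β + S) * (n:ℝ) ^ (1 - β) * u ^ k
        = (Real.Gamma (c + β + S) * ((n:ℝ) * u) ^ k) * (n:ℝ) ^ (1 - β - (k:ℝ)) := by
          rw [e1, mul_pow]; ring
      _ ≤ (Real.Gamma (c + 1 + S) * ((n:ℝ) * m) ^ (β + (k:ℝ) - 1)) * (n:ℝ) ^ (1 - β - (k:ℝ)) := by
          apply mul_le_mul_of_nonneg_right key (by positivity)
      _ = m ^ (β + (k:ℝ) - 1) * Real.Gamma (c + 1 + S) := by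
          rw [Real.mul_rpow hN0.le hm.le]
          rw [show Real.Gamma (c + 1 + S) * ((n:ℝ) ^ (β + (k:ℝ) - 1) * m ^ (β + (k:ℝ) - 1)) *
              (n:ℝ) ^ (1 - β - (k:ℝ)) = (m ^ (β + (k:ℝ) - 1) * Real.Gamma (c + 1 + S)) *
              ((n:ℝ) ^ (β + (k:ℝ) - 1) * (n:ℝ) ^ (1 - β - (k:ℝ))) from by ring]
          rw [← Real.rpow_add hN0, show β + (k:ℝ) - 1 + (1 - β - (k:ℝ)) = 0 by ring,
            Real.rpow_zero, mul_one]
  -- finish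
  have hnpow : (0:ℝ) < (n:ℝ) ^ (1 - β) := Real.rpow_pos_of_pos hN0 _
  rw [div_le_div_iff₀ (by positivity) hnpow, div_mul_eq_mul_div, le_div_iff₀ (by positivity)]
  calc α * Real.Gamma (c + 1) * Real.Gamma (c + β + S) * (n:ℝ) ^ (1 - β) *
        (Real.Gamma (c + β) * u ^ k)
      = (α * Real.Gamma (c + 1) * Real.Gamma (c + β)) *
        (Real.Gamma (c + β + S) * (n:ℝ) ^ (1 - β) * u ^ k) := by ring
    _ ≤ (α * Real.Gamma (c + 1) * Real.Gamma (c + β)) *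
        (m ^ (β + (k:ℝ) - 1) * Real.Gamma (c + 1 + S)) := by
        apply mul_le_mul_of_nonneg_left core (by positivity)
    _ = α * Real.Gamma (c + 1) * m ^ (β + (k:ℝ) - 1) *
        (Real.Gamma (c + β) * Real.Gamma (c + 1 + S)) := by ring
end

section
/- With the same setup as before (β < 1, c > -β, α > 0, R_n ≥ u > max(β,0), Λ_n = α·Γ(c+1)·Γ(c+β+∑_{i=1}^n R_i)/(Γ(c+β)·Γ(c+1+∑_{i=1}^n R_i))), if additionally R_n ≤ b for all n for some constant b, then there exists a constant D with |Λ_{n+1} − Λ_n| ≤ D/n^(2-β) for all n ≥ 1. -/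
open Real Finset

/-- Four-point inequality from log-convexity of Gamma. -/
lemma gamma_four_point {p q r s : ℝ} (hp : 0 < p) (hpq : p ≤ q) (hpr : p ≤ r)
    (hsum : q + r = p + s) : Gamma q * Gamma r ≤ Gamma p * Gamma s := by
  have hqs : q ≤ s := by linarith
  have hrs : r ≤ s := by linarith
  rcases eq_or_lt_of_le (le_trans hpq hqs) with h | h
  · have hq : q = p := le_antisymm (by linarith) hpq
    have hr : r = s := by linarith
    rw [hq, hr]
  · set lam := (s - q) / (s - p) with hlam
    have hsp : 0 < s - p := by linarith
    have hlam0 : 0 ≤ lam := div_nonneg (by linarith) hsp.le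
    have hlam1 : 0 ≤ 1 - lam := by
      rw [hlam, sub_nonneg, div_le_one hsp]; linarith
    have hq' : q = lam * p + (1 - lam) * s := by
      have hmul : lam * (s - p) = s - q := by rw [hlam]; exact div_mul_cancel₀ _ hsp.ne'
      linear_combination hmul
    have hr' : r = (1 - lam) * p + lam * s := by
      have hrq : r = p + s - q := by linarith
      rw [hrq, hq']; ring
    have hps : (p : ℝ) ∈ Set.Ioi (0:ℝ) := hp
    have hss : (s : ℝ) ∈ Set.Ioi (0:ℝ) := by exact lt_of_lt_of_le hp (by linarith)
    have hc := convexOn_log_Gamma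
    have h1 : log (Gamma q) ≤ lam * log (Gamma p) + (1 - lam) * log (Gamma s) := by
      have := hc.2 hps hss hlam0 hlam1 (by linarith)
      rw [smul_eq_mul, smul_eq_mul] at this
      simpa [Function.comp, ← hq'] using this
    have h2 : log (Gamma r) ≤ (1 - lam) * log (Gamma p) + lam * log (Gamma s) := by
      have := hc.2 hps hss hlam1 hlam0 (by linarith)
      rw [smul_eq_mul, smul_eq_mul] at this
      simpa [Function.comp, ← hr'] using this
    have hGp := Gamma_pos_of_pos hp
    have hGq := Gamma_pos_of_pos (lt_of_lt_of_le hp hpq)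
    have hGr := Gamma_pos_of_pos (lt_of_lt_of_le hp hpr)
    have hGs := Gamma_pos_of_pos (lt_of_lt_of_le hp (by linarith : p ≤ s))
    have := add_le_add h1 h2
    have hlog : log (Gamma q * Gamma r) ≤ log (Gamma p * Gamma s) := by
      rw [log_mul hGq.ne' hGr.ne', log_mul hGp.ne' hGs.ne']
      linarith
    have := Real.exp_le_exp.mpr hlog
    rwa [exp_log (mul_pos hGq hGr), exp_log (mul_pos hGp hGs)] at this

/-- The ratio `Γ(x+β)/Γ(x+1)` is antitone (for `β < 1`). -/
lemma ratio_anti {β x x' : ℝ} (hβ : β < 1) (hx : 0 < x + β) (hxx : x ≤ x') :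
    Gamma (x' + β) / Gamma (x' + 1) ≤ Gamma (x + β) / Gamma (x + 1) := by
  have h1 : 0 < x + 1 := by linarith
  have h2 : 0 < x' + 1 := by linarith
  have h3 : 0 < x' + β := by linarith
  rw [div_le_div_iff₀ (Gamma_pos_of_pos h2) (Gamma_pos_of_pos h1)]
  exact gamma_four_point hx (by linarith) (by linarith) (by ring)

/-- Gautschi base case: `0 ≤ β < 1`. -/
lemma gautschi_base {β : ℝ} (hβ : β < 1) (hβ0 : 0 ≤ β) :
    ∀ x : ℝ, 1 ≤ x → Gamma (x + β) ≤ x ^ (β - 1) * Gamma (x + 1) := by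
  intro x hx
  have hx0 : (0:ℝ) < x := by linarith
  have hG2 := Gamma_pos_of_pos hx0
  have hG1 := Gamma_pos_of_pos (by linarith : (0:ℝ) < x + 1)
  have key : Gamma (x + β) ≤ Gamma (x + 1) ^ β * Gamma x ^ (1 - β) := by
    rcases eq_or_lt_of_le hβ0 with h0 | h0
    · rw [← h0]; simp
    · have hc := convexOn_log_Gamma
      have h1 : (x + 1 : ℝ) ∈ Set.Ioi (0:ℝ) := by simp; linarith
      have h2 : (x : ℝ) ∈ Set.Ioi (0:ℝ) := hx0
      have := hc.2 h1 h2 (show (0:ℝ) ≤ β from h0.le) (show (0:ℝ) ≤ 1 - β by linarith)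
        (show β + (1 - β) = 1 by ring)
      rw [smul_eq_mul, smul_eq_mul] at this
      have heq : β * (x + 1) + (1 - β) * x = x + β := by ring
      rw [heq] at this
      simp only [Function.comp] at this
      have hGxβ := Gamma_pos_of_pos (by linarith : (0:ℝ) < x + β)
      calc Gamma (x + β) = exp (log (Gamma (x + β))) := (exp_log hGxβ).symm
        _ ≤ exp (β * log (Gamma (x+1)) + (1-β) * log (Gamma x)) := exp_le_exp.mpr this
        _ = Gamma (x + 1) ^ β * Gamma x ^ (1 - β) := by
            rw [exp_add, mul_comm β, mul_comm (1 - β), exp_mul, exp_mul, exp_log hG1, exp_log hG2]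
  have hGx' : Gamma x = Gamma (x + 1) / x := by
    rw [Gamma_add_one hx0.ne']; field_simp
  calc Gamma (x + β) ≤ Gamma (x + 1) ^ β * Gamma x ^ (1 - β) := key
    _ = Gamma (x + 1) ^ β * (Gamma (x + 1) / x) ^ (1 - β) := by rw [← hGx']
    _ = Gamma (x + 1) ^ β * (Gamma (x + 1) ^ (1 - β) / x ^ (1 - β)) := by
        rw [Real.div_rpow hG1.le hx0.le]
    _ = x ^ (β - 1) * Gamma (x + 1) := by
        rw [div_eq_mul_inv, ← Real.rpow_neg hx0.le, show β - 1 = -(1 - β) by ring,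
          ← mul_assoc, ← Real.rpow_add hG1, show β + (1 - β) = (1:ℝ) by ring,
          Real.rpow_one]
        ring

/-- Gautschi-type upper bound: `Γ(x+β) ≤ C x^(β-1) Γ(x+1)` for large `x`. -/
lemma gautschi_aux (m : ℕ) : ∀ β : ℝ, β < 1 → -β ≤ (m : ℝ) →
    ∃ C : ℝ, 0 < C ∧ ∃ x₀ : ℝ, 1 ≤ x₀ ∧ ∀ x, x₀ ≤ x →
      Gamma (x + β) ≤ C * x ^ (β - 1) * Gamma (x + 1) := by
  induction m with
  | zero =>
    intro β hβ hm
    have hβ0 : 0 ≤ β := by simpa using hm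
    exact ⟨1, one_pos, 1, le_refl _, fun x hx => by
      simpa using gautschi_base hβ hβ0 x hx⟩
  | succ m ih =>
    intro β hβ hm
    rcases le_or_gt 0 β with h0 | h0
    · exact ⟨1, one_pos, 1, le_refl _, fun x hx => by
        simpa using gautschi_base hβ h0 x hx⟩
    · obtain ⟨C, hC, x₀, hx₀, hbd⟩ := ih (β + 1) (by linarith) (by push_cast at hm ⊢; linarith)
      refine ⟨2 * C, by linarith, max x₀ (1 - 2 * β), le_trans hx₀ (le_max_left _ _),
        fun x hx => ?_⟩
      have hx1 : x₀ ≤ x := le_trans (le_max_left _ _) hx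
      have hx2 : 1 - 2 * β ≤ x := le_trans (le_max_right _ _) hx
      have hx0 : (0:ℝ) < x := by linarith
      have hxβ : 0 < x + β := by linarith
      have hhalf : x / 2 ≤ x + β := by linarith
      have hGrec : Gamma (x + β + 1) = (x + β) * Gamma (x + β) := Gamma_add_one hxβ.ne'
      have hbd' := hbd x hx1
      have heq : x + (β + 1) = x + β + 1 := by ring
      rw [heq, hGrec] at hbd'
      have hG1 := Gamma_pos_of_pos (by linarith : (0:ℝ) < x + 1)
      have hxm1 : Gamma (x + β) ≤ C * x ^ (β + 1 - 1) * Gamma (x + 1) / (x + β) := by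
        rw [le_div_iff₀ hxβ]; linarith [hbd']
      calc Gamma (x + β) ≤ C * x ^ (β + 1 - 1) * Gamma (x + 1) / (x + β) := hxm1
        _ ≤ C * x ^ β * Gamma (x + 1) / (x / 2) := by
            rw [show β + 1 - 1 = β by ring]
            apply div_le_div_of_nonneg_left _ (by linarith) hhalf
            positivity
        _ = 2 * C * x ^ (β - 1) * Gamma (x + 1) := by
            rw [show β - 1 = β + (-1) by ring, Real.rpow_add hx0, Real.rpow_neg_one]
            field_simp

/-- One-step identity for the Gamma ratio. -/
lemma ratio_step {β z : ℝ} (hz : 0 < z + β) (hz0 : 0 < z) :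
    Gamma (z + β) / Gamma (z + 1) - Gamma (z + 1 + β) / Gamma (z + 1 + 1)
      = (1 - β) * (Gamma (z + β) / Gamma (z + 1)) / (z + 1) := by
  have h1 : Gamma (z + 1 + β) = (z + β) * Gamma (z + β) := by
    rw [show z + 1 + β = (z + β) + 1 by ring, Gamma_add_one hz.ne']
  have h2 : Gamma (z + 1 + 1) = (z + 1) * Gamma (z + 1) :=
    Gamma_add_one (by linarith : (z + 1 : ℝ) ≠ 0)
  have hG := Gamma_pos_of_pos (show (0:ℝ) < z + 1 by linarith)
  rw [h1, h2]
  field_simp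
  ring

/-- Telescoped bound over `M` unit steps. -/
lemma ratio_diff_le {β : ℝ} (hβ : β < 1) (M : ℕ) {x : ℝ} (hx : 1 ≤ x) (hxb : 1 ≤ x + β) :
    Gamma (x + β) / Gamma (x + 1) - Gamma (x + M + β) / Gamma (x + M + 1)
      ≤ M * (1 - β) * (Gamma (x + β) / Gamma (x + 1)) / x := by
  induction M with
  | zero => simp
  | succ M ih =>
    have hx0 : (0:ℝ) < x := by linarith
    have hzβ : (0:ℝ) < x + M + β := by
      have : (0:ℝ) ≤ M := Nat.cast_nonneg M
      linarith
    have hz0 : (0:ℝ) < x + M := by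
      have : (0:ℝ) ≤ M := Nat.cast_nonneg M
      linarith
    have hstep := ratio_step (z := x + M) hzβ hz0
    have hA0 : 0 ≤ Gamma (x + M + β) / Gamma (x + M + 1) :=
      div_nonneg (Gamma_pos_of_pos hzβ).le (Gamma_pos_of_pos (by linarith)).le
    have hMc : (0:ℝ) ≤ (M : ℝ) := Nat.cast_nonneg M
    have hmono : Gamma (x + M + β) / Gamma (x + M + 1) ≤ Gamma (x + β) / Gamma (x + 1) :=
      ratio_anti hβ (by linarith) (by linarith : x ≤ x + M)
    have hA0' : 0 ≤ Gamma (x + β) / Gamma (x + 1) := le_trans hA0 hmono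
    have hsecond : (1 - β) * (Gamma (x + M + β) / Gamma (x + M + 1)) / (x + M + 1)
        ≤ (1 - β) * (Gamma (x + β) / Gamma (x + 1)) / x := by
      apply div_le_div₀ (mul_nonneg (by linarith) hA0') _ hx0 (by linarith)
      exact mul_le_mul_of_nonneg_left hmono (by linarith)
    have hcast : ((M + 1 : ℕ) : ℝ) = (M : ℝ) + 1 := by push_cast; ring
    rw [hcast]
    have hrw : x + ((M : ℝ) + 1) + β = x + M + 1 + β := by ring
    have hrw2 : x + ((M : ℝ) + 1) + 1 = x + M + 1 + 1 := by ring
    rw [hrw, hrw2]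
    have hdist : ((M:ℝ) + 1) * (1 - β) * (Gamma (x + β) / Gamma (x + 1)) / x
        = (M:ℝ) * (1 - β) * (Gamma (x + β) / Gamma (x + 1)) / x
          + (1 - β) * (Gamma (x + β) / Gamma (x + 1)) / x := by ring
    linarith [ih, hstep, hsecond, hdist]

set_option maxHeartbeats 1000000 in
/-- Increment bound `|Λ_{n+1} − Λ_n| ≤ D / n^(2-β)` in the weighted IBP. -/
theorem Lambda_increment_bound (β c α u b : ℝ) (hβ : β < 1) (hc : -β < c) (hα : 0 < α)
    (hu : max β 0 < u) (R : ℕ → ℝ) (hR : ∀ n, u ≤ R n) (hRb : ∀ n, R n ≤ b) :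
    ∃ D : ℝ, ∀ n : ℕ, 1 ≤ n →
      |α * Real.Gamma (c + 1) * Real.Gamma (c + β + ∑ i ∈ Finset.Icc 1 (n + 1), R i) /
          (Real.Gamma (c + β) * Real.Gamma (c + 1 + ∑ i ∈ Finset.Icc 1 (n + 1), R i)) -
        α * Real.Gamma (c + 1) * Real.Gamma (c + β + ∑ i ∈ Finset.Icc 1 n, R i) /
          (Real.Gamma (c + β) * Real.Gamma (c + 1 + ∑ i ∈ Finset.Icc 1 n, R i))| ≤
      D / (n : ℝ) ^ (2 - β) := by
  -- basic positivity facts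
  have hu0 : 0 < u := lt_of_le_of_lt (le_max_right β 0) hu
  have hβu : β < u := lt_of_le_of_lt (le_max_left β 0) hu
  have hcβ : 0 < c + β := by linarith
  have hcu : 0 < c + u := by linarith
  have hub : u ≤ b := le_trans (hR 1) (hRb 1)
  set κ : ℝ := min u (c + u) with hκdef
  have hκ : 0 < κ := lt_min hu0 hcu
  set M : ℕ := ⌈b⌉₊ with hMdef
  have hbM : b ≤ (M : ℝ) := Nat.le_ceil b
  set K : ℝ := α * Gamma (c + 1) / Gamma (c + β) with hKdef
  have hK : 0 < K :=
    div_pos (mul_pos hα (Gamma_pos_of_pos (by linarith : (0:ℝ) < c + 1)))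
      (Gamma_pos_of_pos hcβ)
  set S : ℕ → ℝ := fun n => ∑ i ∈ Finset.Icc 1 n, R i with hSdef
  set A : ℝ → ℝ := fun x => Gamma (x + β) / Gamma (x + 1) with hAdef
  -- sum lower bound
  have hSlb : ∀ n : ℕ, (n : ℝ) * u ≤ S n := by
    intro n
    have hcard : (Finset.Icc 1 n).card = n := by
      rw [Nat.card_Icc]; omega
    have := Finset.card_nsmul_le_sum (Finset.Icc 1 n) R u (fun i _ => hR i)
    rwa [hcard, nsmul_eq_mul] at this
  have hSrec : ∀ n : ℕ, S (n + 1) = S n + R (n + 1) := by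
    intro n
    exact Finset.sum_Icc_succ_top (Nat.le_add_left 1 n) R
  -- lower bound on c + S n
  have hylb : ∀ n : ℕ, 1 ≤ n → κ * n ≤ c + S n := by
    intro n hn
    have hn1 : (1:ℝ) ≤ n := by exact_mod_cast hn
    have := hSlb n
    rcases le_or_gt 0 c with h | h
    · have h1 : κ * n ≤ (n : ℝ) * u := by
        rw [mul_comm]
        exact mul_le_mul_of_nonneg_left (min_le_left _ _) (by linarith)
      linarith
    · have h1 : κ * n ≤ (c + u) * n :=
        mul_le_mul_of_nonneg_right (min_le_right _ _) (by linarith)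
      have h2 : (c + u) * (n : ℝ) = c * n + (n : ℝ) * u := by ring
      have hcn : c * (n : ℝ) ≤ c * 1 := mul_le_mul_of_nonpos_left hn1 h.le
      linarith
  have hyu : ∀ n : ℕ, 1 ≤ n → c + u ≤ c + S n := by
    intro n hn
    have hn1 : (1:ℝ) ≤ n := by exact_mod_cast hn
    have h1 : (1:ℝ) * u ≤ (n : ℝ) * u := mul_le_mul_of_nonneg_right hn1 hu0.le
    linarith [hSlb n]
  -- Gautschi constants
  obtain ⟨C, hC, x₀, hx₀1, hgav⟩ := gautschi_aux ⌈-β⌉₊ β hβ (Nat.le_ceil _)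
  set x₁ : ℝ := max x₀ (max 1 (1 - β)) with hx₁def
  have hx₁a : x₀ ≤ x₁ := le_max_left _ _
  have hx₁b : (1:ℝ) ≤ x₁ := le_trans (le_max_left _ _) (le_max_right _ _)
  have hx₁c : 1 - β ≤ x₁ := le_trans (le_max_right _ _) (le_max_right _ _)
  set N : ℕ := ⌈x₁ / κ⌉₊ + 1 with hNdef
  have hN1 : 1 ≤ N := Nat.le_add_left 1 _
  have hNx : x₁ ≤ κ * N := by
    have h1 : x₁ / κ ≤ (N : ℝ) := le_trans (Nat.le_ceil _) (by rw [hNdef]; push_cast; linarith [Nat.le_ceil (x₁/κ)])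
    calc x₁ = κ * (x₁ / κ) := by field_simp
      _ ≤ κ * N := mul_le_mul_of_nonneg_left h1 hκ.le
  -- rewrite of the expression
  have hE : ∀ s : ℝ,
      α * Gamma (c + 1) * Gamma (c + β + s) / (Gamma (c + β) * Gamma (c + 1 + s))
        = K * A (c + s) := by
    intro s
    rw [hKdef, hAdef]
    simp only
    rw [div_mul_div_comm, show c + s + β = c + β + s by ring,
      show c + s + 1 = c + 1 + s by ring]
  refine ⟨max (K * ((M : ℝ) * (1 - β) * C * κ ^ (β - 2)))
      (K * A (c + u) * (N : ℝ) ^ (2 - β)), ?_⟩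
  intro n hn
  have hn1 : (1:ℝ) ≤ (n:ℝ) := by exact_mod_cast hn
  have hnpos : (0:ℝ) < (n:ℝ) := by linarith
  have hpow_pos : (0:ℝ) < (n:ℝ) ^ (2 - β) := rpow_pos_of_pos hnpos _
  have hyn := hylb n hn
  have hynu := hyu n hn
  have hy0 : 0 < c + S n := lt_of_lt_of_le hcu hynu
  have hSn_pos : u ≤ S n := by
    have h1 : (1:ℝ) * u ≤ (n : ℝ) * u := mul_le_mul_of_nonneg_right hn1 hu0.le
    linarith [hSlb n]
  have hyβ : 0 < c + S n + β := by linarith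
  have hy1 : c + S (n + 1) = c + S n + R (n + 1) := by rw [hSrec]; ring
  have hy1β : 0 < c + S (n + 1) + β := by
    rw [hy1]; linarith [hR (n + 1)]
  have hy1pos : 0 < c + S (n + 1) := by rw [hy1]; linarith [hR (n + 1)]
  have hmono1 : A (c + S (n + 1)) ≤ A (c + S n) := by
    simp only [hAdef]
    rw [hy1]
    exact ratio_anti hβ hyβ (by linarith [hR (n + 1)])
  have hA1_nonneg : 0 ≤ A (c + S (n + 1)) := by
    simp only [hAdef]
    exact div_nonneg (Gamma_pos_of_pos hy1β).le (Gamma_pos_of_pos (by linarith)).le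
  have hAcu_mono : A (c + S n) ≤ A (c + u) := by
    simp only [hAdef]
    exact ratio_anti hβ (by linarith) hynu
  have hAcu_nonneg : 0 ≤ A (c + u) := le_trans (le_trans hA1_nonneg hmono1) hAcu_mono
  have hS1 : (∑ i ∈ Finset.Icc 1 (n+1), R i) = S (n+1) := rfl
  have hS2 : (∑ i ∈ Finset.Icc 1 n, R i) = S n := rfl
  rw [hS1, hS2, hE (S (n+1)), hE (S n)]
  have habs : |K * A (c + S (n+1)) - K * A (c + S n)|
      = K * (A (c + S n) - A (c + S (n+1))) := by
    have h0 : K * A (c + S (n+1)) - K * A (c + S n) ≤ 0 := by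
      have := mul_le_mul_of_nonneg_left hmono1 hK.le
      linarith
    rw [abs_of_nonpos h0]
    ring
  rw [habs]
  rcases le_or_gt (N:ℝ) (n:ℝ) with hbig | hsmall
  · -- large n : use the Gautschi estimate
    have hx₁y : x₁ ≤ c + S n := by
      calc x₁ ≤ κ * N := hNx
        _ ≤ κ * n := mul_le_mul_of_nonneg_left hbig hκ.le
        _ ≤ c + S n := hyn
    have h1y : (1:ℝ) ≤ c + S n := le_trans hx₁b hx₁y
    have h1yβ : (1:ℝ) ≤ c + S n + β := by linarith
    have hmono2 : A (c + S n + M) ≤ A (c + S (n + 1)) := by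
      simp only [hAdef]
      rw [hy1]
      exact ratio_anti hβ (by linarith [hR (n + 1)]) (by linarith [hRb (n + 1), hbM])
    have htel : A (c + S n) - A (c + S n + M)
        ≤ (M : ℝ) * (1 - β) * A (c + S n) / (c + S n) := by
      simp only [hAdef]
      exact ratio_diff_le hβ M h1y h1yβ
    have hgau : A (c + S n) ≤ C * (c + S n) ^ (β - 1) := by
      simp only [hAdef]
      rw [div_le_iff₀ (Gamma_pos_of_pos (by linarith : (0:ℝ) < c + S n + 1))]
      exact hgav (c + S n) (le_trans hx₁a hx₁y)
    have h2 : A (c + S n) - A (c + S (n + 1))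
        ≤ (M : ℝ) * (1 - β) * A (c + S n) / (c + S n) := by linarith
    have h3 : (M : ℝ) * (1 - β) * A (c + S n) / (c + S n)
        ≤ (M : ℝ) * (1 - β) * (C * (c + S n) ^ (β - 1)) / (c + S n) := by
      rw [div_le_div_iff₀ hy0 hy0]
      have : (M : ℝ) * (1 - β) * A (c + S n) ≤ (M : ℝ) * (1 - β) * (C * (c + S n) ^ (β - 1)) :=
        mul_le_mul_of_nonneg_left hgau (mul_nonneg (Nat.cast_nonneg M) (by linarith))
      exact mul_le_mul_of_nonneg_right this hy0.le
    have hpow1 : (c + S n) ^ (β - 1) / (c + S n) = (c + S n) ^ (β - 2) := by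
      rw [show β - 1 = (β - 2) + 1 by ring, Real.rpow_add hy0, Real.rpow_one,
        mul_div_assoc, div_self hy0.ne', mul_one]
    have hpow2 : (c + S n) ^ (β - 2) ≤ κ ^ (β - 2) * (n : ℝ) ^ (β - 2) := by
      have h := Real.rpow_le_rpow_of_nonpos (mul_pos hκ hnpos) hyn (by linarith : β - 2 ≤ 0)
      rwa [Real.mul_rpow hκ.le hnpos.le] at h
    have h4 : (M : ℝ) * (1 - β) * (C * (c + S n) ^ (β - 1)) / (c + S n)
        = (M : ℝ) * (1 - β) * C * (c + S n) ^ (β - 2) := by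
      rw [← hpow1]; ring
    have h5 : A (c + S n) - A (c + S (n + 1))
        ≤ (M : ℝ) * (1 - β) * C * (κ ^ (β - 2) * (n : ℝ) ^ (β - 2)) := by
      have hMC : (0:ℝ) ≤ (M : ℝ) * (1 - β) * C :=
        mul_nonneg (mul_nonneg (Nat.cast_nonneg M) (by linarith)) hC.le
      calc A (c + S n) - A (c + S (n + 1))
          ≤ (M : ℝ) * (1 - β) * C * (c + S n) ^ (β - 2) := by
            rw [← h4]; linarith
        _ ≤ _ := mul_le_mul_of_nonneg_left hpow2 hMC
    have hninv : (n : ℝ) ^ (β - 2) = ((n : ℝ) ^ (2 - β))⁻¹ := by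
      rw [show β - 2 = -(2 - β) by ring, Real.rpow_neg hnpos.le]
    calc K * (A (c + S n) - A (c + S (n + 1)))
        ≤ K * ((M : ℝ) * (1 - β) * C * (κ ^ (β - 2) * (n : ℝ) ^ (β - 2))) :=
          mul_le_mul_of_nonneg_left h5 hK.le
      _ = K * ((M : ℝ) * (1 - β) * C * κ ^ (β - 2)) / (n : ℝ) ^ (2 - β) := by
          rw [hninv]; ring
      _ ≤ _ / (n : ℝ) ^ (2 - β) := by
          gcongr
          exact le_max_left _ _
  · -- small n : crude bound
    have hNpow : (n : ℝ) ^ (2 - β) ≤ (N : ℝ) ^ (2 - β) :=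
      Real.rpow_le_rpow hnpos.le hsmall.le (by linarith)
    have hcrude : K * (A (c + S n) - A (c + S (n + 1))) ≤ K * A (c + u) := by
      apply mul_le_mul_of_nonneg_left _ hK.le
      linarith
    calc K * (A (c + S n) - A (c + S (n + 1))) ≤ K * A (c + u) := hcrude
      _ ≤ K * A (c + u) * (N : ℝ) ^ (2 - β) / (n : ℝ) ^ (2 - β) := by
          rw [le_div_iff₀ hpow_pos]
          apply mul_le_mul_of_nonneg_left hNpow
          positivity
      _ ≤ _ / (n : ℝ) ^ (2 - β) := by
          gcongr
          exact le_max_right _ _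
end

section
/- Let u > 0, β ∈ [0,1), c ∈ ℝ, and let (R_i) be random variables with R_i ≥ u and c + ∑_{i=1}^j R_i ≥ v·j for all j, where v = min(u, c+u) > 0. If r ≥ u is a constant, then for every j ≥ 1: E| (rj)^{β-1} − (c + ∑_{i=1}^j R_i)^{β-1} | ≤ ((1-β)/v^{2-β}) · ( |c|/j^{2-β} + E|R̄_j − r| / j^{1-β} ), where R̄_j = (1/j)∑_{i=1}^j R_i. -/
open MeasureTheory Finset

lemma rpow_diff_key (β m : ℝ) (hβ1 : β < 1) (hm : 0 < m) {x y : ℝ} (hx : m ≤ x) (hy : m ≤ y) :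
    |x ^ (β - 1) - y ^ (β - 1)| ≤ (1 - β) / m ^ (2 - β) * |x - y| := by
  have hderiv : ∀ t ∈ Set.Ici m, HasDerivWithinAt (fun s : ℝ => s ^ (β - 1))
      ((β - 1) * t ^ (β - 1 - 1)) (Set.Ici m) t := fun t ht =>
    (Real.hasDerivAt_rpow_const (Or.inl (hm.trans_le ht).ne')).hasDerivWithinAt
  have hbound : ∀ t ∈ Set.Ici m, ‖(β - 1) * t ^ (β - 1 - 1)‖ ≤ (1 - β) * m ^ (β - 2) := by
    intro t ht
    have htpos : (0:ℝ) < t := hm.trans_le ht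
    rw [norm_mul, Real.norm_eq_abs, Real.norm_eq_abs, abs_of_nonpos (by linarith),
      abs_of_nonneg (Real.rpow_nonneg htpos.le _)]
    have : t ^ (β - 1 - 1) ≤ m ^ (β - 2) := by
      rw [show β - 1 - 1 = β - 2 by ring]
      exact Real.rpow_le_rpow_of_nonpos hm ht (by linarith)
    nlinarith [Real.rpow_nonneg htpos.le (β - 1 - 1)]
  have := Convex.norm_image_sub_le_of_norm_hasDerivWithin_le hderiv hbound
    (convex_Ici m) (Set.mem_Ici.2 hy) (Set.mem_Ici.2 hx)
  simp only [Real.norm_eq_abs] at this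
  have hmb : m ^ (β - 2) = (m ^ (2 - β))⁻¹ := by
    rw [show β - 2 = -(2 - β) by ring, Real.rpow_neg hm.le]
  calc |x ^ (β - 1) - y ^ (β - 1)| ≤ (1 - β) * m ^ (β - 2) * |x - y| := this
    _ = (1 - β) / m ^ (2 - β) * |x - y| := by rw [hmb]; ring

/-- Moment bound: `E|(rj)^{β-1} − (c + ∑_{i≤j} R_i)^{β-1}|
  ≤ ((1-β)/v^{2-β}) (|c|/j^{2-β} + E|R̄_j − r|/j^{1-β})`. -/
theorem rpow_moment_bound
    {Ω : Type*} {mΩ : MeasurableSpace Ω} (μ : Measure Ω) [IsProbabilityMeasure μ]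
    (β u c r v : ℝ) (hβ0 : 0 ≤ β) (hβ1 : β < 1) (hu : 0 < u)
    (hv : v = min u (c + u)) (hvpos : 0 < v) (hr : u ≤ r)
    (R : ℕ → Ω → ℝ) (hmeas : ∀ i, Measurable (R i)) (hint : ∀ i, Integrable (R i) μ)
    (hRu : ∀ i ω, u ≤ R i ω)
    (hlow : ∀ j : ℕ, 1 ≤ j → ∀ ω, v * j ≤ c + ∑ i ∈ Finset.Icc 1 j, R i ω)
    (j : ℕ) (hj : 1 ≤ j) :
    ∫ ω, |(r * j) ^ (β - 1) - (c + ∑ i ∈ Finset.Icc 1 j, R i ω) ^ (β - 1)| ∂μ ≤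
      ((1 - β) / v ^ (2 - β)) *
        (|c| / (j : ℝ) ^ (2 - β) +
          (∫ ω, |(∑ i ∈ Finset.Icc 1 j, R i ω) / j - r| ∂μ) / (j : ℝ) ^ (1 - β)) := by
  have hjpos : (0:ℝ) < j := by exact_mod_cast hj
  set S : Ω → ℝ := fun ω => ∑ i ∈ Finset.Icc 1 j, R i ω with hS
  set C : ℝ := (1 - β) / v ^ (2 - β) with hC
  have hCnn : 0 ≤ C := div_nonneg (by linarith) (Real.rpow_nonneg hvpos.le _)
  set g : Ω → ℝ := fun ω => C * (|c| / (j : ℝ) ^ (2 - β) + |S ω / j - r| / (j : ℝ) ^ (1 - β))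
    with hg
  have hvu : v ≤ u := hv ▸ min_le_left _ _
  -- pointwise bound
  have hpt : ∀ ω, |(r * j) ^ (β - 1) - (c + S ω) ^ (β - 1)| ≤ g ω := by
    intro ω
    have hm : (0:ℝ) < v * j := by positivity
    have hx : v * j ≤ r * j := by nlinarith [hvu.trans hr]
    have hy : v * j ≤ c + S ω := hlow j hj ω
    have hkey := rpow_diff_key β (v * j) hβ1 hm hx hy
    have hsplit : |r * j - (c + S ω)| ≤ |c| + j * |S ω / j - r| := by
      have : S ω / j - r = (S ω - r * j) / j := by field_simp
      rw [this, abs_div, abs_of_pos hjpos]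
      have h1 : |r * j - (c + S ω)| ≤ |c| + |S ω - r * j| := by
        have : r * j - (c + S ω) = -c - (S ω - r * j) := by ring
        rw [this]
        calc |(-c) - (S ω - r * j)| ≤ |(-c)| + |S ω - r * j| := abs_sub _ _
          _ = |c| + |S ω - r * j| := by rw [abs_neg]
      calc |r * j - (c + S ω)| ≤ |c| + |S ω - r * j| := h1
        _ = |c| + j * (|S ω - r * j| / j) := by field_simp
    have hmul : (1 - β) / (v * j) ^ (2 - β) = C / (j:ℝ) ^ (2 - β) := by
      rw [Real.mul_rpow hvpos.le hjpos.le, hC]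
      field_simp
    calc |(r * j) ^ (β - 1) - (c + S ω) ^ (β - 1)|
        ≤ (1 - β) / (v * j) ^ (2 - β) * |r * j - (c + S ω)| := hkey
      _ ≤ (1 - β) / (v * j) ^ (2 - β) * (|c| + j * |S ω / j - r|) := by
          exact mul_le_mul_of_nonneg_left hsplit
            (div_nonneg (by linarith) (Real.rpow_nonneg hm.le _))
      _ = C / (j:ℝ) ^ (2 - β) * (|c| + j * |S ω / j - r|) := by rw [hmul]
      _ = g ω := by
          have h2 : (j:ℝ) ^ (2 - β) = j * (j:ℝ) ^ (1 - β) := by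
            rw [show (2:ℝ) - β = 1 + (1 - β) by ring, Real.rpow_add hjpos, Real.rpow_one]
          have hj1 : (0:ℝ) < (j:ℝ) ^ (1 - β) := Real.rpow_pos_of_pos hjpos _
          simp only [hg, h2]
          field_simp
  -- integrability of g
  have hSint : Integrable S μ := integrable_finset_sum _ (fun i _ => hint i)
  have hgint : Integrable g μ := by
    apply Integrable.const_mul
    apply Integrable.add (integrable_const _)
    apply Integrable.div_const
    exact ((hSint.div_const _).sub (integrable_const r)).abs
  have hmono := integral_mono_of_nonneg
    (Filter.Eventually.of_forall (fun ω => abs_nonneg _))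
    hgint (Filter.Eventually.of_forall hpt)
  refine hmono.trans_eq ?_
  rw [hg, integral_const_mul]
  congr 1
  have h2 : Integrable (fun a => |S a / (j:ℝ) - r| / (j:ℝ) ^ (1 - β)) μ := by
    apply Integrable.div_const
    exact ((hSint.div_const _).sub (integrable_const r)).abs
  rw [integral_add (integrable_const _) h2, integral_const, integral_div]
  simp
  rfl
end

section
/- Suppose a sequence of nonnegative random variables W_n satisfies, for some constants t ∈ (0, 1/2], D* > 0 and n₀ ≥ 1 with ∏_{j≥n₀}(1 + D*/j²) ≤ 2: E(e^{t·W_{n+1}}) ≤ exp(D*·t/n^{2-β})·E(exp(t·W_n·(1 + D*/n²))) for all n ≥ n₀, where β < 1, and E(e^{2t·W_{n₀}}) < ∞. Then sup_n E(e^{t·W_n}) ≤ exp(∑_{j≥n₀} 2D*·t/j^{2-β})·E(e^{2t·W_{n₀}}) < ∞. -/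
open MeasureTheory Filter ENNReal

/-- Iteration bound giving uniform exponential moments: if
`E(e^{s W_{n+1}}) ≤ exp(D* s/n^{2-β}) E(exp(s(1 + D*/n²) W_n))` for `n ≥ n₀`
(for the relevant parameters `s ∈ [t, 2t]`), `∏_{j≥n₀}(1 + D*/j²) ≤ 2` and
`E(e^{2t W_{n₀}}) < ∞`, then
`sup_{n≥n₀} E(e^{t W_n}) ≤ exp(∑_{j≥n₀} 2 D* t/j^{2-β}) E(e^{2t W_{n₀}}) < ∞`. -/
theorem uniform_exponential_moments
    {Ω : Type*} {mΩ : MeasurableSpace Ω} (μ : Measure Ω) [IsProbabilityMeasure μ]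
    (W : ℕ → Ω → ℝ) (hW : ∀ n ω, 0 ≤ W n ω) (hWmeas : ∀ n, Measurable (W n))
    (t Dstar β : ℝ) (ht0 : 0 < t) (ht : t ≤ 1 / 2) (hD : 0 < Dstar) (hβ : β < 1)
    (n₀ : ℕ) (hn₀ : 1 ≤ n₀)
    (hprod : ∏' j : {j : ℕ // n₀ ≤ j}, (1 + Dstar / (j : ℝ) ^ 2) ≤ 2)
    (hiter : ∀ s : ℝ, t ≤ s → s ≤ 2 * t → ∀ n : ℕ, n₀ ≤ n →
      ∫⁻ ω, ENNReal.ofReal (Real.exp (s * W (n + 1) ω)) ∂μ ≤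
        ENNReal.ofReal (Real.exp (Dstar * s / (n : ℝ) ^ (2 - β))) *
          ∫⁻ ω, ENNReal.ofReal (Real.exp (s * (1 + Dstar / (n : ℝ) ^ 2) * W n ω)) ∂μ)
    (hfin : (∫⁻ ω, ENNReal.ofReal (Real.exp (2 * t * W n₀ ω)) ∂μ) ≠ ⊤) :
    (⨆ n : ℕ, ∫⁻ ω, ENNReal.ofReal (Real.exp (t * W (n₀ + n) ω)) ∂μ) ≤
        ENNReal.ofReal
          (Real.exp (∑' j : {j : ℕ // n₀ ≤ j}, 2 * Dstar * t / (j : ℝ) ^ (2 - β))) *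
          ∫⁻ ω, ENNReal.ofReal (Real.exp (2 * t * W n₀ ω)) ∂μ ∧
      ENNReal.ofReal
          (Real.exp (∑' j : {j : ℕ // n₀ ≤ j}, 2 * Dstar * t / (j : ℝ) ^ (2 - β))) *
          (∫⁻ ω, ENNReal.ofReal (Real.exp (2 * t * W n₀ ω)) ∂μ) ≠ ⊤ := by
  -- summability of the exponent sum
  have hpow : (1:ℝ) < 2 - β := by linarith
  have hsum0 : Summable (fun j : ℕ => 2 * Dstar * t / (j:ℝ) ^ (2 - β)) := by
    have h := (Real.summable_one_div_nat_rpow.mpr hpow).mul_left (2 * Dstar * t)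
    refine h.congr fun j => ?_
    rw [mul_one_div]
  have hsum : Summable (fun j : {j : ℕ // n₀ ≤ j} => 2 * Dstar * t / ((j:ℕ):ℝ) ^ (2 - β)) :=
    hsum0.subtype _
  -- summability of the logs of the product factors
  have hsumD0 : Summable (fun j : ℕ => Dstar / (j:ℝ) ^ 2) := by
    have h := (Real.summable_one_div_nat_pow.mpr (by norm_num : 1 < 2)).mul_left Dstar
    refine h.congr fun j => ?_
    rw [mul_one_div]
  have hsumD : Summable (fun j : {j : ℕ // n₀ ≤ j} => Dstar / ((j:ℕ):ℝ) ^ 2) :=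
    hsumD0.subtype _
  have hfpos : ∀ j : {j : ℕ // n₀ ≤ j}, (0:ℝ) < 1 + Dstar / ((j:ℕ):ℝ) ^ 2 := by
    intro j
    have : (0:ℝ) ≤ Dstar / ((j:ℕ):ℝ) ^ 2 := by positivity
    linarith
  have hlog_nonneg : ∀ j : {j : ℕ // n₀ ≤ j}, 0 ≤ Real.log (1 + Dstar / ((j:ℕ):ℝ) ^ 2) := by
    intro j
    refine Real.log_nonneg ?_
    have : (0:ℝ) ≤ Dstar / ((j:ℕ):ℝ) ^ 2 := by positivity
    linarith
  have hlogsum : Summable (fun j : {j : ℕ // n₀ ≤ j} => Real.log (1 + Dstar / ((j:ℕ):ℝ) ^ 2)) := by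
    refine Summable.of_nonneg_of_le hlog_nonneg (fun j => ?_) hsumD
    have h := Real.log_le_sub_one_of_pos (hfpos j)
    linarith
  have htprod : (∏' j : {j : ℕ // n₀ ≤ j}, (1 + Dstar / ((j:ℕ):ℝ) ^ 2)) =
      Real.exp (∑' j : {j : ℕ // n₀ ≤ j}, Real.log (1 + Dstar / ((j:ℕ):ℝ) ^ 2)) := by
    have h := Real.rexp_tsum_eq_tprod hfpos hlogsum
    exact h.symm
  -- embedding of range n into the subtype
  let e : ℕ ↪ {j : ℕ // n₀ ≤ j} :=
    ⟨fun k => ⟨n₀ + k, Nat.le_add_right _ _⟩, by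
      intro a b h
      simpa using congrArg Subtype.val h⟩
  -- partial products and sums
  set P : ℕ → ℝ := fun n => ∏ k ∈ Finset.range n, (1 + Dstar / ((n₀ + k : ℕ):ℝ) ^ 2) with hPdef
  set S : ℕ → ℝ := fun n => ∑ k ∈ Finset.range n, 2 * Dstar * t / ((n₀ + k : ℕ):ℝ) ^ (2 - β)
    with hSdef
  have hfact1 : ∀ k : ℕ, (1:ℝ) ≤ 1 + Dstar / ((n₀ + k : ℕ):ℝ) ^ 2 := by
    intro k
    have : (0:ℝ) ≤ Dstar / ((n₀ + k : ℕ):ℝ) ^ 2 := by positivity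
    linarith
  have hP1 : ∀ n, (1:ℝ) ≤ P n := by
    intro n
    calc (1:ℝ) = ∏ _k ∈ Finset.range n, (1:ℝ) := by simp
      _ ≤ P n := Finset.prod_le_prod (fun _ _ => zero_le_one) (fun k _ => hfact1 k)
  have hP2 : ∀ n, P n ≤ 2 := by
    intro n
    have hlogmap : ∑ k ∈ Finset.range n, Real.log (1 + Dstar / ((n₀ + k : ℕ):ℝ) ^ 2)
        = ∑ j ∈ (Finset.range n).map e, Real.log (1 + Dstar / ((j:ℕ):ℝ) ^ 2) := by
      rw [Finset.sum_map]; rfl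
    have hPlog : P n = Real.exp (∑ k ∈ Finset.range n,
        Real.log (1 + Dstar / ((n₀ + k : ℕ):ℝ) ^ 2)) := by
      rw [Real.exp_sum]
      refine Finset.prod_congr rfl fun k _ => ?_
      rw [Real.exp_log]
      have : (0:ℝ) ≤ Dstar / ((n₀ + k : ℕ):ℝ) ^ 2 := by positivity
      linarith
    have hsumle : ∑ k ∈ Finset.range n, Real.log (1 + Dstar / ((n₀ + k : ℕ):ℝ) ^ 2)
        ≤ ∑' j : {j : ℕ // n₀ ≤ j}, Real.log (1 + Dstar / ((j:ℕ):ℝ) ^ 2) := by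
      rw [hlogmap]
      exact Summable.sum_le_tsum _ (fun j _ => hlog_nonneg j) hlogsum
    calc P n = Real.exp (∑ k ∈ Finset.range n,
          Real.log (1 + Dstar / ((n₀ + k : ℕ):ℝ) ^ 2)) := hPlog
      _ ≤ Real.exp (∑' j : {j : ℕ // n₀ ≤ j}, Real.log (1 + Dstar / ((j:ℕ):ℝ) ^ 2)) :=
          Real.exp_le_exp.mpr hsumle
      _ = ∏' j : {j : ℕ // n₀ ≤ j}, (1 + Dstar / ((j:ℕ):ℝ) ^ 2) := htprod.symm
      _ ≤ 2 := hprod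
  have hS : ∀ n, S n ≤ ∑' j : {j : ℕ // n₀ ≤ j}, 2 * Dstar * t / ((j:ℕ):ℝ) ^ (2 - β) := by
    intro n
    have hmap : S n = ∑ j ∈ (Finset.range n).map e, 2 * Dstar * t / ((j:ℕ):ℝ) ^ (2 - β) := by
      rw [Finset.sum_map]; rfl
    rw [hmap]
    refine Summable.sum_le_tsum _ (fun j _ => ?_) hsum
    positivity
  -- key induction
  have key : ∀ n : ℕ, ∀ s : ℝ, t ≤ s → s * P n ≤ 2 * t →
      ∫⁻ ω, ENNReal.ofReal (Real.exp (s * W (n₀ + n) ω)) ∂μ ≤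
        ENNReal.ofReal (Real.exp (S n)) *
          ∫⁻ ω, ENNReal.ofReal (Real.exp (s * P n * W n₀ ω)) ∂μ := by
    intro n
    induction n with
    | zero =>
      intro s _ _
      simp [hPdef, hSdef]
    | succ n ih =>
      intro s hs1 hs2
      have hs0 : 0 < s := lt_of_lt_of_le ht0 hs1
      have hPsucc : P (n + 1) = P n * (1 + Dstar / ((n₀ + n : ℕ):ℝ) ^ 2) :=
        Finset.prod_range_succ _ _
      have hSsucc : S (n + 1) = S n + 2 * Dstar * t / ((n₀ + n : ℕ):ℝ) ^ (2 - β) :=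
        Finset.sum_range_succ _ _
      have hs2t : s ≤ 2 * t := by
        have := le_mul_of_one_le_right hs0.le (hP1 (n + 1))
        linarith
      have step := hiter s hs1 hs2t (n₀ + n) (Nat.le_add_right _ _)
      set s' : ℝ := s * (1 + Dstar / ((n₀ + n : ℕ):ℝ) ^ 2) with hs'def
      have hs'1 : t ≤ s' := by
        have := le_mul_of_one_le_right hs0.le (hfact1 n)
        linarith
      have hs'P : s' * P n = s * P (n + 1) := by
        rw [hs'def, hPsucc]; ring
      have ih' := ih s' hs'1 (by rw [hs'P]; exact hs2)
      have hnpos : (0:ℝ) < ((n₀ + n : ℕ):ℝ) ^ (2 - β) := by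
        have h1 : (0:ℝ) < ((n₀ + n : ℕ):ℝ) := by
          have : 1 ≤ n₀ + n := le_trans hn₀ (Nat.le_add_right _ _)
          exact_mod_cast this
        positivity
      have hexp_le : Dstar * s / ((n₀ + n : ℕ):ℝ) ^ (2 - β)
          ≤ 2 * Dstar * t / ((n₀ + n : ℕ):ℝ) ^ (2 - β) := by
        gcongr ?_ / _
        nlinarith [mul_le_mul_of_nonneg_left hs2t hD.le]
      calc ∫⁻ ω, ENNReal.ofReal (Real.exp (s * W (n₀ + (n + 1)) ω)) ∂μ
          ≤ ENNReal.ofReal (Real.exp (Dstar * s / ((n₀ + n : ℕ):ℝ) ^ (2 - β))) *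
            ∫⁻ ω, ENNReal.ofReal (Real.exp (s' * W (n₀ + n) ω)) ∂μ := by
            have h : n₀ + (n + 1) = (n₀ + n) + 1 := rfl
            rw [h]
            exact step
        _ ≤ ENNReal.ofReal (Real.exp (Dstar * s / ((n₀ + n : ℕ):ℝ) ^ (2 - β))) *
            (ENNReal.ofReal (Real.exp (S n)) *
              ∫⁻ ω, ENNReal.ofReal (Real.exp (s' * P n * W n₀ ω)) ∂μ) :=
            mul_le_mul_right ih' _
        _ = ENNReal.ofReal (Real.exp (Dstar * s / ((n₀ + n : ℕ):ℝ) ^ (2 - β) + S n)) *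
            ∫⁻ ω, ENNReal.ofReal (Real.exp (s * P (n + 1) * W n₀ ω)) ∂μ := by
            rw [← mul_assoc, ← ENNReal.ofReal_mul (Real.exp_nonneg _), ← Real.exp_add, hs'P]
        _ ≤ ENNReal.ofReal (Real.exp (S (n + 1))) *
            ∫⁻ ω, ENNReal.ofReal (Real.exp (s * P (n + 1) * W n₀ ω)) ∂μ := by
            refine mul_le_mul_left (ENNReal.ofReal_le_ofReal (Real.exp_le_exp.mpr ?_)) _
            rw [hSsucc]
            linarith
  -- conclude
  constructor
  · refine iSup_le fun n => ?_
    have h1 := key n t le_rfl (by nlinarith [hP2 n, hP1 n])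
    refine le_trans h1 ?_
    refine mul_le_mul' (ENNReal.ofReal_le_ofReal (Real.exp_le_exp.mpr (hS n))) ?_
    refine lintegral_mono fun ω => ENNReal.ofReal_le_ofReal (Real.exp_le_exp.mpr ?_)
    have := mul_le_mul_of_nonneg_right
      (by nlinarith [hP2 n] : t * P n ≤ 2 * t) (hW n₀ ω)
    linarith
  · exact ENNReal.mul_ne_top ENNReal.ofReal_ne_top hfin
end
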